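/- Deterministic core of the MLMC complexity theorem: let α, β, θ, c₁, c₂ > 0 satisfy α ≥ (1/2)·min{β, θ}. Then there exists a constant c₄ > 0 such that for every ε ∈ (0, e^{-1}) there exist L ∈ ℕ and positive integers N₀, …, N_L with c₁²·2^{−2αL} + Σ_{ℓ=0}^{L} c₂·N_ℓ^{−1}·2^{−βℓ} ≤ ε², while the total cost Σ_{ℓ=0}^{L} N_ℓ·2^{θℓ} is at most c₄·ε^{−2} if β > θ, at most c₄·ε^{−2}·(log(1/ε))² if β = θ, and at most c₄·ε^{−2−(θ−β)/α} if 0 < β < θ. -/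

import Mathlib

open Finset

lemma h_geom_le (q : ℝ) (h0 : 0 ≤ q) (h1 : q < 1) (n : ℕ) :
    ∑ i ∈ Finset.range n, q ^ i ≤ (1 - q)⁻¹ := by
  rw [geom_sum_eq h1.ne, div_le_iff_of_neg (by linarith)]
  have hq : (0:ℝ) ≤ q ^ n := pow_nonneg h0 n
  have h : (1 - q)⁻¹ * (q - 1) = -1 := by
    have : q - 1 = -(1 - q) := by ring
    rw [this, mul_neg, inv_mul_cancel₀ (by linarith : (1:ℝ) - q ≠ 0)]
  rw [h]; linarith

lemma h_geom_le' (q : ℝ) (h1 : 1 < q) (L : ℕ) :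
    ∑ i ∈ Finset.range (L + 1), q ^ i ≤ q ^ L * (1 - q⁻¹)⁻¹ := by
  have hq0 : (0:ℝ) < q := by linarith
  have key : ∑ i ∈ Finset.range (L+1), q ^ i = q ^ L * ∑ i ∈ Finset.range (L+1), (q⁻¹) ^ i := by
    rw [Finset.mul_sum, ← Finset.sum_range_reflect]
    apply Finset.sum_congr rfl
    intro i hi
    have hi' : i ≤ L := by simpa [Nat.lt_succ_iff] using hi
    have : L + 1 - 1 - i = L - i := by omega
    rw [this, inv_pow, ← div_eq_mul_inv]
    exact pow_sub₀ q hq0.ne' hi'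
  rw [key]
  have hlt : q⁻¹ < 1 := inv_lt_one_of_one_lt₀ h1
  exact mul_le_mul_of_nonneg_left (h_geom_le q⁻¹ (by positivity) hlt _) (by positivity)

lemma h_rpow_nat (c : ℝ) (ℓ : ℕ) : (2:ℝ) ^ (c * (ℓ:ℝ)) = ((2:ℝ) ^ c) ^ ℓ := by
  rw [Real.rpow_mul (by norm_num), Real.rpow_natCast]

lemma alg_var (c₂ ε K u v w N : ℝ) (hc₂ : 0 < c₂) (hε : 0 < ε) (hK : 0 < K)
    (hu : 0 < u) (hv : 0 < v) (hN : 2*c₂/ε^2*K*u⁻¹ ≤ N) (huvw : u * v = w) :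
    c₂ * N⁻¹ * v ≤ ε^2/(2*K) * w := by
  have hM0 : 0 < 2*c₂/ε^2*K*u⁻¹ := by positivity
  have hN0 : 0 < N := lt_of_lt_of_le hM0 hN
  have h2 : N⁻¹ ≤ (2*c₂/ε^2*K*u⁻¹)⁻¹ := inv_anti₀ hM0 hN
  have h3 : c₂ * N⁻¹ * v ≤ c₂ * (2*c₂/ε^2*K*u⁻¹)⁻¹ * v :=
    mul_le_mul_of_nonneg_right (mul_le_mul_of_nonneg_left h2 hc₂.le) hv.le
  have he : c₂ * (2*c₂/ε^2*K*u⁻¹)⁻¹ * v = ε^2/(2*K) * (u*v) := by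
    field_simp
  rw [huvw] at he
  linarith

lemma alg_cost (c₂ ε K u w z N : ℝ) (hc₂ : 0 < c₂) (hε : 0 < ε) (hK : 0 < K)
    (hu : 0 < u) (hw : 0 < w) (hN : N ≤ 2*c₂/ε^2*K*u⁻¹ + 1) (huw : u⁻¹ * w = z) :
    N * w ≤ 2*c₂/ε^2*K * z + w := by
  have h1 : N * w ≤ (2*c₂/ε^2*K*u⁻¹ + 1) * w := mul_le_mul_of_nonneg_right hN hw.le
  have he : (2*c₂/ε^2*K*u⁻¹ + 1) * w = 2*c₂/ε^2*K * (u⁻¹*w) + w := by ring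
  rw [huw] at he
  linarith

set_option maxHeartbeats 1000000 in
lemma mlmc_aux (α β θ c₁ c₂ : ℝ) (hα : 0 < α) (hβ : 0 < β) (hθ : 0 < θ)
    (hc₁ : 0 < c₁) (hc₂ : 0 < c₂) :
    ∃ C A : ℝ, 1 ≤ C ∧ 0 < A ∧
      ∀ ε : ℝ, 0 < ε → ε < Real.exp (-1) →
        ∃ (L : ℕ) (Nl : ℕ → ℕ),
          (∀ ℓ ≤ L, 0 < Nl ℓ) ∧
          (c₁ ^ 2 * (2 : ℝ) ^ (-(2 * α) * (L : ℝ))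
              + ∑ ℓ ∈ Finset.range (L + 1),
                  c₂ * ((Nl ℓ : ℝ))⁻¹ * (2 : ℝ) ^ (-β * (ℓ : ℝ)) ≤ ε ^ 2) ∧
          (∑ ℓ ∈ Finset.range (L + 1), (Nl ℓ : ℝ) * (2 : ℝ) ^ (θ * (ℓ : ℝ))
              ≤ 2 * c₂ / ε ^ 2 * (∑ j ∈ Finset.range (L + 1), ((2:ℝ) ^ (-((β - θ) / 2))) ^ j) ^ 2
                + (1 - (2:ℝ) ^ (-θ))⁻¹ * ((2:ℝ) ^ θ) ^ L) ∧
          (2:ℝ) ^ (α * (L : ℝ)) ≤ C / ε ∧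
          ((L : ℝ) + 1) ≤ A * Real.log (1 / ε) := by
  refine ⟨max 1 ((2:ℝ)^α * Real.sqrt (2*c₁^2)),
      (|Real.log (2*c₁^2)| + 2)/(2*α*Real.log 2) + 2, le_max_left _ _, ?_, ?_⟩
  · have hlog2 : 0 < Real.log 2 := Real.log_pos one_lt_two
    positivity
  intro ε hε hεe
  have hε1 : ε < 1 := hεe.trans (by
    rw [← Real.exp_zero]; exact Real.exp_lt_exp.mpr (by norm_num))
  have hy0 : (0:ℝ) < 2*c₁^2/ε^2 := by positivity
  obtain ⟨y, hy⟩ : ∃ y : ℝ, y = 2*c₁^2/ε^2 := ⟨_, rfl⟩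
  obtain ⟨x, hx⟩ : ∃ x : ℝ, x = Real.logb 2 y / (2*α) := ⟨_, rfl⟩
  obtain ⟨L, hLdef⟩ : ∃ L : ℕ, L = ⌈x⌉₊ := ⟨_, rfl⟩
  rw [← hy] at hy0
  obtain ⟨rq, hrq⟩ : ∃ rq : ℝ, rq = (2:ℝ)^(-((β-θ)/2)) := ⟨_, rfl⟩
  have hrq0 : (0:ℝ) < rq := hrq ▸ Real.rpow_pos_of_pos two_pos _
  obtain ⟨K, hK⟩ : ∃ K : ℝ, K = ∑ j ∈ Finset.range (L+1), rq ^ j := ⟨_, rfl⟩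
  have hK1 : 1 ≤ K := by
    rw [hK]
    calc (1:ℝ) = rq ^ 0 := (pow_zero rq).symm
      _ ≤ _ := Finset.single_le_sum (fun j _ => pow_nonneg hrq0.le j)
          (Finset.mem_range.mpr (Nat.succ_pos L))
  have hK0 : (0:ℝ) < K := lt_of_lt_of_le one_pos hK1
  set M : ℕ → ℝ := fun ℓ => 2*c₂/ε^2 * K * ((2:ℝ)^((β+θ)/2 * (ℓ:ℝ)))⁻¹ with hM
  have hMval : ∀ ℓ, M ℓ = 2*c₂/ε^2 * K * ((2:ℝ)^((β+θ)/2 * (ℓ:ℝ)))⁻¹ := fun ℓ => rfl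
  have hM0 : ∀ ℓ, 0 < M ℓ := by
    intro ℓ
    rw [hMval ℓ]
    have hu : (0:ℝ) < (2:ℝ)^((β+θ)/2 * (ℓ:ℝ)) := Real.rpow_pos_of_pos two_pos _
    exact mul_pos (mul_pos (by positivity) hK0) (inv_pos.mpr hu)
  refine ⟨L, fun ℓ => ⌈M ℓ⌉₊, fun ℓ _ => Nat.ceil_pos.mpr (hM0 ℓ), ?_, ?_, ?_, ?_⟩
  · -- accuracy
    have h2al : Real.logb 2 y ≤ 2*α*(L:ℝ) := by
      have h1 : x ≤ (L:ℝ) := hLdef ▸ Nat.le_ceil x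
      have h2 : Real.logb 2 y = 2*α*x := by rw [hx]; field_simp
      rw [h2]; exact mul_le_mul_of_nonneg_left h1 (by positivity)
    have hy_le : y ≤ (2:ℝ)^(2*α*(L:ℝ)) := by
      nth_rewrite 1 [← Real.rpow_logb two_pos (by norm_num) hy0]
      exact Real.rpow_le_rpow_of_exponent_le one_le_two h2al
    have hbias : c₁^2 * (2:ℝ)^(-(2*α)*(L:ℝ)) ≤ ε^2/2 := by
      have he : (-(2*α)*(L:ℝ)) = -(2*α*(L:ℝ)) := by ring
      rw [he, Real.rpow_neg (by norm_num : (0:ℝ) ≤ 2)]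
      have hp : (0:ℝ) < (2:ℝ)^(2*α*(L:ℝ)) := Real.rpow_pos_of_pos two_pos _
      have hinv : ((2:ℝ)^(2*α*(L:ℝ)))⁻¹ ≤ y⁻¹ := inv_anti₀ hy0 hy_le
      have h5 : c₁^2 * ((2:ℝ)^(2*α*(L:ℝ)))⁻¹ ≤ c₁^2 * y⁻¹ :=
        mul_le_mul_of_nonneg_left hinv (by positivity)
      have hyi : c₁^2 * y⁻¹ = ε^2/2 := by
        rw [hy]; field_simp
      linarith
    have hvar : ∑ ℓ ∈ Finset.range (L+1), c₂ * ((⌈M ℓ⌉₊ : ℝ))⁻¹ * (2:ℝ)^(-β*(ℓ:ℝ)) ≤ ε^2/2 := by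
      have hterm : ∀ ℓ ∈ Finset.range (L+1),
          c₂ * ((⌈M ℓ⌉₊ : ℝ))⁻¹ * (2:ℝ)^(-β*(ℓ:ℝ)) ≤ ε^2/(2*K) * rq ^ ℓ := by
        intro ℓ _
        have hu0 : (0:ℝ) < (2:ℝ)^((β+θ)/2 * (ℓ:ℝ)) := Real.rpow_pos_of_pos two_pos _
        have hv0 : (0:ℝ) < (2:ℝ)^(-β*(ℓ:ℝ)) := Real.rpow_pos_of_pos two_pos _
        have euv : (2:ℝ)^((β+θ)/2 * (ℓ:ℝ)) * (2:ℝ)^(-β*(ℓ:ℝ)) = rq ^ ℓ := by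
          rw [← Real.rpow_add two_pos, hrq, ← h_rpow_nat]
          congr 1; ring
        have hle : 2*c₂/ε^2*K*((2:ℝ)^((β+θ)/2 * (ℓ:ℝ)))⁻¹ ≤ ((⌈M ℓ⌉₊ : ℝ)) := by
          rw [← hMval ℓ]; exact Nat.le_ceil _
        exact alg_var c₂ ε K _ _ _ _ hc₂ hε hK0 hu0 hv0 hle euv
      calc ∑ ℓ ∈ Finset.range (L+1), c₂ * ((⌈M ℓ⌉₊:ℝ))⁻¹ * (2:ℝ)^(-β*(ℓ:ℝ))
          ≤ ∑ ℓ ∈ Finset.range (L+1), ε^2/(2*K) * rq ^ ℓ := Finset.sum_le_sum hterm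
        _ = ε^2/(2*K) * K := by rw [← Finset.mul_sum, ← hK]
        _ = ε^2/2 := by field_simp
    linarith
  · -- cost
    have h2θ : (1:ℝ) < (2:ℝ)^θ :=
      Real.one_lt_rpow_iff_of_pos two_pos |>.mpr (Or.inl ⟨one_lt_two, hθ⟩)
    have hterm : ∀ ℓ ∈ Finset.range (L+1),
        ((⌈M ℓ⌉₊:ℝ)) * (2:ℝ)^(θ*(ℓ:ℝ)) ≤ 2*c₂/ε^2*K * rq ^ ℓ + ((2:ℝ)^θ) ^ ℓ := by
      intro ℓ _
      have hu0 : (0:ℝ) < (2:ℝ)^((β+θ)/2 * (ℓ:ℝ)) := Real.rpow_pos_of_pos two_pos _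
      have hw0 : (0:ℝ) < (2:ℝ)^(θ*(ℓ:ℝ)) := Real.rpow_pos_of_pos two_pos _
      have euw : ((2:ℝ)^((β+θ)/2 * (ℓ:ℝ)))⁻¹ * (2:ℝ)^(θ*(ℓ:ℝ)) = rq ^ ℓ := by
        rw [← Real.rpow_neg (by norm_num : (0:ℝ) ≤ 2), ← Real.rpow_add two_pos, hrq, ← h_rpow_nat]
        congr 1; ring
      have hceil : ((⌈M ℓ⌉₊:ℝ)) ≤ 2*c₂/ε^2*K*((2:ℝ)^((β+θ)/2 * (ℓ:ℝ)))⁻¹ + 1 := by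
        rw [← hMval ℓ]; exact le_of_lt (Nat.ceil_lt_add_one (hM0 ℓ).le)
      have h := alg_cost c₂ ε K _ _ _ _ hc₂ hε hK0 hu0 hw0 hceil euw
      calc ((⌈M ℓ⌉₊:ℝ)) * (2:ℝ)^(θ*(ℓ:ℝ)) ≤ 2*c₂/ε^2*K * rq ^ ℓ + (2:ℝ)^(θ*(ℓ:ℝ)) := h
        _ = 2*c₂/ε^2*K * rq ^ ℓ + ((2:ℝ)^θ) ^ ℓ := by rw [h_rpow_nat θ ℓ]
    calc ∑ ℓ ∈ Finset.range (L+1), ((⌈M ℓ⌉₊:ℝ)) * (2:ℝ)^(θ*(ℓ:ℝ))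
        ≤ ∑ ℓ ∈ Finset.range (L+1), (2*c₂/ε^2*K * rq ^ ℓ + ((2:ℝ)^θ) ^ ℓ) :=
          Finset.sum_le_sum hterm
      _ = 2*c₂/ε^2*K * K + ∑ ℓ ∈ Finset.range (L+1), ((2:ℝ)^θ) ^ ℓ := by
          rw [Finset.sum_add_distrib, ← Finset.mul_sum, ← hK]
      _ ≤ 2*c₂/ε^2 * (∑ j ∈ Finset.range (L+1), ((2:ℝ)^(-((β-θ)/2))) ^ j)^2
            + (1 - (2:ℝ)^(-θ))⁻¹ * ((2:ℝ)^θ)^L := by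
          have eS : (∑ j ∈ Finset.range (L+1), ((2:ℝ)^(-((β-θ)/2))) ^ j) = K := by
            rw [hK, hrq]
          rw [eS]
          have e2 : 2*c₂/ε^2*K*K = 2*c₂/ε^2*K^2 := by ring
          rw [e2]
          apply add_le_add_right
          rw [Real.rpow_neg (by norm_num : (0:ℝ) ≤ 2), mul_comm]
          exact h_geom_le' _ h2θ L
  · -- 2^{αL} ≤ C/ε
    rcases le_or_gt x 0 with hx0 | hx0
    · have hL0 : L = 0 := by rw [hLdef]; exact Nat.ceil_eq_zero.mpr hx0
      rw [hL0]
      simp only [Nat.cast_zero, mul_zero, Real.rpow_zero]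
      rw [le_div_iff₀ hε, one_mul]
      calc ε ≤ 1 := hε1.le
        _ ≤ max 1 ((2:ℝ)^α * Real.sqrt (2*c₁^2)) := le_max_left _ _
    · have hxL : (L:ℝ) < x + 1 := hLdef ▸ Nat.ceil_lt_add_one hx0.le
      have h1 : α*(L:ℝ) ≤ Real.logb 2 y * (1/2) + α := by
        have hax : α * x = Real.logb 2 y * (1/2) := by
          rw [hx]; field_simp
        nlinarith [hxL, hα]
      have h2 : (2:ℝ)^(α*(L:ℝ)) ≤ (2:ℝ)^(Real.logb 2 y * (1/2) + α) :=
        Real.rpow_le_rpow_of_exponent_le one_le_two h1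
      have h3 : (2:ℝ)^(Real.logb 2 y * (1/2) + α) = Real.sqrt y * (2:ℝ)^α := by
        rw [Real.rpow_add two_pos, Real.rpow_mul (by norm_num : (0:ℝ) ≤ 2),
          Real.rpow_logb two_pos (by norm_num) hy0]
        congr 1
        rw [Real.sqrt_eq_rpow]
      have h4 : Real.sqrt y * ε ≤ Real.sqrt (2*c₁^2) := by
        have : Real.sqrt y * ε = Real.sqrt (y * ε^2) := by
          rw [Real.sqrt_mul (by positivity : (0:ℝ) ≤ y), Real.sqrt_sq hε.le]
        rw [this]
        apply Real.sqrt_le_sqrt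
        rw [hy]
        have he : 2*c₁^2/ε^2 * ε^2 = 2*c₁^2 := by field_simp
        rw [he]
      have h5 : Real.sqrt y * (2:ℝ)^α ≤ max 1 ((2:ℝ)^α * Real.sqrt (2*c₁^2)) / ε := by
        rw [le_div_iff₀ hε]
        calc Real.sqrt y * (2:ℝ)^α * ε = (2:ℝ)^α * (Real.sqrt y * ε) := by ring
          _ ≤ (2:ℝ)^α * Real.sqrt (2*c₁^2) := by
              apply mul_le_mul_of_nonneg_left h4 (Real.rpow_nonneg (by norm_num) α)
          _ ≤ max 1 ((2:ℝ)^α * Real.sqrt (2*c₁^2)) := le_max_right _ _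
      calc (2:ℝ)^(α*(L:ℝ)) ≤ (2:ℝ)^(Real.logb 2 y * (1/2) + α) := h2
        _ = Real.sqrt y * (2:ℝ)^α := h3
        _ ≤ _ := h5
  · -- L+1 ≤ A log(1/ε)
    have ht1 : 1 < Real.log (1/ε) := by
      rw [one_div, Real.log_inv]
      have h := Real.log_lt_log hε hεe
      rw [Real.log_exp] at h
      linarith
    have hlog2 : 0 < Real.log 2 := Real.log_pos one_lt_two
    have hxle : x ≤ (|Real.log (2*c₁^2)| + 2)/(2*α*Real.log 2) * Real.log (1/ε) := by
      have hly : Real.log y = Real.log (2*c₁^2) + 2*Real.log (1/ε) := by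
        rw [hy, Real.log_div (by positivity : (0:ℝ) < 2*c₁^2).ne' (by positivity : (0:ℝ) < ε^2).ne',
          Real.log_pow, one_div, Real.log_inv]
        push_cast; ring
      have hxe : x = Real.log y / (Real.log 2 * (2*α)) := by
        rw [hx, Real.logb, div_div]
      rw [hxe, hly, div_le_iff₀ (by positivity)]
      have habs : Real.log (2*c₁^2) ≤ |Real.log (2*c₁^2)| := le_abs_self _
      have ht0 : (1:ℝ) ≤ Real.log (1/ε) := ht1.le
      have he : (|Real.log (2*c₁^2)| + 2)/(2*α*Real.log 2) * Real.log (1/ε) * (Real.log 2 * (2*α))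
          = (|Real.log (2*c₁^2)| + 2) * Real.log (1/ε) := by
        field_simp
      rw [he]
      nlinarith [abs_nonneg (Real.log (2*c₁^2))]
    have hLle : (L:ℝ) ≤ max x 0 + 1 := by
      rcases le_or_gt x 0 with h0 | h0
      · have hz : L = 0 := by rw [hLdef]; exact Nat.ceil_eq_zero.mpr h0
        rw [hz]
        simp only [Nat.cast_zero]
        have : (0:ℝ) ≤ max x 0 := le_max_right _ _
        linarith
      · have h5 : (L:ℝ) < x + 1 := hLdef ▸ Nat.ceil_lt_add_one h0.le
        have hm : x ≤ max x 0 := le_max_left _ _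
        linarith
    have hmax : max x 0 ≤ (|Real.log (2*c₁^2)| + 2)/(2*α*Real.log 2) * Real.log (1/ε) := by
      apply max_le hxle
      have ht0 : (1:ℝ) ≤ Real.log (1/ε) := ht1.le
      positivity
    have ht0 : (1:ℝ) ≤ Real.log (1/ε) := ht1.le
    have hB : (0:ℝ) ≤ (|Real.log (2*c₁^2)| + 2)/(2*α*Real.log 2) := by positivity
    nlinarith [hLle, hmax, ht0, hB]

set_option maxHeartbeats 1000000 in
/-- Deterministic core of the MLMC complexity theorem. -/
theorem mlmc_complexity_deterministic
    (α β θ c₁ c₂ : ℝ) (hα : 0 < α) (hβ : 0 < β) (hθ : 0 < θ)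
    (hc₁ : 0 < c₁) (hc₂ : 0 < c₂) (hαβθ : (1 / 2) * min β θ ≤ α) :
    ∃ c₄ : ℝ, 0 < c₄ ∧
      ∀ ε : ℝ, 0 < ε → ε < Real.exp (-1) →
        ∃ (L : ℕ) (Nl : ℕ → ℕ),
          (∀ ℓ ≤ L, 0 < Nl ℓ) ∧
          c₁ ^ 2 * (2 : ℝ) ^ (-(2 * α) * (L : ℝ))
              + ∑ ℓ ∈ Finset.range (L + 1),
                  c₂ * ((Nl ℓ : ℝ))⁻¹ * (2 : ℝ) ^ (-β * (ℓ : ℝ)) ≤ ε ^ 2 ∧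
          (θ < β →
            ∑ ℓ ∈ Finset.range (L + 1), (Nl ℓ : ℝ) * (2 : ℝ) ^ (θ * (ℓ : ℝ))
              ≤ c₄ * ε ^ (-2 : ℝ)) ∧
          (β = θ →
            ∑ ℓ ∈ Finset.range (L + 1), (Nl ℓ : ℝ) * (2 : ℝ) ^ (θ * (ℓ : ℝ))
              ≤ c₄ * ε ^ (-2 : ℝ) * (Real.log (1 / ε)) ^ 2) ∧
          (β < θ →
            ∑ ℓ ∈ Finset.range (L + 1), (Nl ℓ : ℝ) * (2 : ℝ) ^ (θ * (ℓ : ℝ))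
              ≤ c₄ * ε ^ (-2 - (θ - β) / α)) := by
  obtain ⟨C, A, hC, hA, haux⟩ := mlmc_aux α β θ c₁ c₂ hα hβ hθ hc₁ hc₂
  have hC0 : (0:ℝ) < C := lt_of_lt_of_le one_pos hC
  have h2θ1 : (2:ℝ)^(-θ) < 1 := Real.rpow_lt_one_of_one_lt_of_neg one_lt_two (by linarith)
  have h2θ0 : (0:ℝ) < (2:ℝ)^(-θ) := Real.rpow_pos_of_pos two_pos _
  have hG0 : (0:ℝ) < (1 - (2:ℝ)^(-θ))⁻¹ := by
    have h : (0:ℝ) < 1 - (2:ℝ)^(-θ) := by linarith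
    positivity
  set G : ℝ := (1 - (2:ℝ)^(-θ))⁻¹ with hGdef
  -- generic rpow facts
  have hpow2 : ∀ (L : ℕ) (ε : ℝ), 0 < ε → (2:ℝ)^(α*(L:ℝ)) ≤ C/ε → ∀ p : ℝ, 0 ≤ p →
      (2:ℝ)^((α*p)*(L:ℝ)) ≤ C^p * ε^(-p) := by
    intro L ε hε hαL p hp
    have e : (2:ℝ)^((α*p)*(L:ℝ)) = ((2:ℝ)^(α*(L:ℝ)))^p := by
      rw [← Real.rpow_mul (by norm_num : (0:ℝ) ≤ 2)]
      congr 1; ring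
    rw [e]
    calc ((2:ℝ)^(α*(L:ℝ)))^p ≤ (C/ε)^p :=
          Real.rpow_le_rpow (Real.rpow_nonneg (by norm_num) _) hαL hp
      _ = C^p * ε^(-p) := by
          rw [Real.div_rpow hC0.le hε.le, Real.rpow_neg hε.le, div_eq_mul_inv]
  rcases lt_trichotomy θ β with hc | hc | hc
  · -- case θ < β
    have hθα : θ ≤ 2*α := by
      have := hαβθ; rw [min_eq_right hc.le] at this; linarith
    have hrq1 : (2:ℝ)^(-((β-θ)/2)) < 1 :=
      Real.rpow_lt_one_of_one_lt_of_neg one_lt_two (by linarith)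
    have hrq0 : (0:ℝ) < (2:ℝ)^(-((β-θ)/2)) := Real.rpow_pos_of_pos two_pos _
    set K₀ : ℝ := (1 - (2:ℝ)^(-((β-θ)/2)))⁻¹ with hK₀def
    have hK₀0 : (0:ℝ) < K₀ := by
      have h : (0:ℝ) < 1 - (2:ℝ)^(-((β-θ)/2)) := by linarith
      positivity
    refine ⟨2*c₂*K₀^2 + G * C^(θ/α), by positivity, ?_⟩
    intro ε hε hεe
    have hε1 : ε < 1 := hεe.trans (by
      rw [← Real.exp_zero]; exact Real.exp_lt_exp.mpr (by norm_num))
    obtain ⟨L, Nl, hpos, hacc, hcost, hαL, hL1⟩ := haux ε hε hεe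
    refine ⟨L, Nl, hpos, hacc, ?_, fun h => absurd h (by intro h; rw [h] at hc; exact lt_irrefl θ hc), fun h => absurd h (by linarith)⟩
    intro _
    set S : ℝ := ∑ j ∈ Finset.range (L+1), ((2:ℝ)^(-((β-θ)/2)))^j with hSdef
    have hSnn : (0:ℝ) ≤ S := Finset.sum_nonneg fun j _ => pow_nonneg hrq0.le j
    have hSle : S ≤ K₀ := h_geom_le _ hrq0.le hrq1 _
    have hS2 : S^2 ≤ K₀^2 := pow_le_pow_left₀ hSnn hSle 2
    have he2 : ε^(-2:ℝ) = (ε^2)⁻¹ := by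
      rw [show ((-2:ℝ)) = -((2:ℕ):ℝ) by norm_num, Real.rpow_neg hε.le, Real.rpow_natCast]
    have h2θL : ((2:ℝ)^θ)^L ≤ C^(θ/α) * ε^(-(θ/α)) := by
      have e : ((2:ℝ)^θ)^L = (2:ℝ)^((α*(θ/α))*(L:ℝ)) := by
        rw [← h_rpow_nat θ L]
        congr 1
        field_simp
      rw [e]
      exact hpow2 L ε hε hαL (θ/α) (by positivity)
    have hεθ : ε^(-(θ/α)) ≤ ε^(-2:ℝ) := by
      apply Real.rpow_le_rpow_of_exponent_ge hε hε1.le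
      have : θ/α ≤ 2 := by rw [div_le_iff₀ hα]; linarith
      linarith
    calc ∑ ℓ ∈ Finset.range (L+1), ((Nl ℓ:ℝ)) * (2:ℝ)^(θ*(ℓ:ℝ))
        ≤ 2*c₂/ε^2 * S^2 + G * ((2:ℝ)^θ)^L := hcost
      _ ≤ 2*c₂*K₀^2 * ε^(-2:ℝ) + G * (C^(θ/α) * ε^(-2:ℝ)) := by
          apply add_le_add
          · rw [he2]
            calc 2*c₂/ε^2 * S^2 = 2*c₂*S^2 * (ε^2)⁻¹ := by ring
              _ ≤ 2*c₂*K₀^2 * (ε^2)⁻¹ := by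
                  exact mul_le_mul_of_nonneg_right
                    (mul_le_mul_of_nonneg_left hS2 (by positivity : (0:ℝ) ≤ 2*c₂)) (by positivity)
          · apply mul_le_mul_of_nonneg_left _ hG0.le
            calc ((2:ℝ)^θ)^L ≤ C^(θ/α) * ε^(-(θ/α)) := h2θL
              _ ≤ C^(θ/α) * ε^(-2:ℝ) := by
                  apply mul_le_mul_of_nonneg_left hεθ (by positivity)
      _ = (2*c₂*K₀^2 + G * C^(θ/α)) * ε^(-2:ℝ) := by ring
  · -- case θ = β
    subst hc
    have hθα : θ ≤ 2*α := by
      have := hαβθ; rw [min_self] at this; linarith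
    refine ⟨2*c₂*A^2 + G * C^(θ/α), by positivity, ?_⟩
    intro ε hε hεe
    have hε1 : ε < 1 := hεe.trans (by
      rw [← Real.exp_zero]; exact Real.exp_lt_exp.mpr (by norm_num))
    have ht1 : 1 < Real.log (1/ε) := by
      rw [one_div, Real.log_inv]
      have h := Real.log_lt_log hε hεe
      rw [Real.log_exp] at h
      linarith
    obtain ⟨L, Nl, hpos, hacc, hcost, hαL, hL1⟩ := haux ε hε hεe
    refine ⟨L, Nl, hpos, hacc, fun h => absurd h (lt_irrefl θ), ?_, fun h => absurd h (lt_irrefl θ)⟩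
    intro _
    have hS : (∑ j ∈ Finset.range (L+1), ((2:ℝ)^(-((θ-θ)/2)))^j) = (L:ℝ)+1 := by
      norm_num
    have he2 : ε^(-2:ℝ) = (ε^2)⁻¹ := by
      rw [show ((-2:ℝ)) = -((2:ℕ):ℝ) by norm_num, Real.rpow_neg hε.le, Real.rpow_natCast]
    have h2θL : ((2:ℝ)^θ)^L ≤ C^(θ/α) * ε^(-(θ/α)) := by
      have e : ((2:ℝ)^θ)^L = (2:ℝ)^((α*(θ/α))*(L:ℝ)) := by
        rw [← h_rpow_nat θ L]
        congr 1
        field_simp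
      rw [e]
      exact hpow2 L ε hε hαL (θ/α) (by positivity)
    have hεθ : ε^(-(θ/α)) ≤ ε^(-2:ℝ) := by
      apply Real.rpow_le_rpow_of_exponent_ge hε hε1.le
      have : θ/α ≤ 2 := by rw [div_le_iff₀ hα]; linarith
      linarith
    have hL2 : ((L:ℝ)+1)^2 ≤ A^2 * (Real.log (1/ε))^2 := by
      have h0 : (0:ℝ) ≤ (L:ℝ)+1 := by positivity
      calc ((L:ℝ)+1)^2 ≤ (A * Real.log (1/ε))^2 := pow_le_pow_left₀ h0 hL1 2
        _ = A^2 * (Real.log (1/ε))^2 := by rw [mul_pow]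
    have ht2 : (1:ℝ) ≤ (Real.log (1/ε))^2 := by
      calc (1:ℝ) = 1^2 := by norm_num
        _ ≤ (Real.log (1/ε))^2 := pow_le_pow_left₀ (by norm_num) ht1.le 2
    calc ∑ ℓ ∈ Finset.range (L+1), ((Nl ℓ:ℝ)) * (2:ℝ)^(θ*(ℓ:ℝ))
        ≤ 2*c₂/ε^2 * ((L:ℝ)+1)^2 + G * ((2:ℝ)^θ)^L := by rw [← hS]; exact hcost
      _ ≤ 2*c₂*A^2 * ε^(-2:ℝ) * (Real.log (1/ε))^2 + G * C^(θ/α) * ε^(-2:ℝ) * (Real.log (1/ε))^2 := by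
          apply add_le_add
          · rw [he2]
            calc 2*c₂/ε^2 * ((L:ℝ)+1)^2 = 2*c₂*((L:ℝ)+1)^2 * (ε^2)⁻¹ := by ring
              _ ≤ 2*c₂*(A^2 * (Real.log (1/ε))^2) * (ε^2)⁻¹ := by
                  exact mul_le_mul_of_nonneg_right
                    (mul_le_mul_of_nonneg_left hL2 (by positivity : (0:ℝ) ≤ 2*c₂)) (by positivity)
              _ = 2*c₂*A^2 * (ε^2)⁻¹ * (Real.log (1/ε))^2 := by ring
          · have h1 : G * ((2:ℝ)^θ)^L ≤ G * (C^(θ/α) * ε^(-2:ℝ)) := by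
              apply mul_le_mul_of_nonneg_left _ hG0.le
              calc ((2:ℝ)^θ)^L ≤ C^(θ/α) * ε^(-(θ/α)) := h2θL
                _ ≤ C^(θ/α) * ε^(-2:ℝ) := mul_le_mul_of_nonneg_left hεθ (by positivity)
            have h2 : G * (C^(θ/α) * ε^(-2:ℝ)) ≤ G * C^(θ/α) * ε^(-2:ℝ) * (Real.log (1/ε))^2 := by
              have hCθ : (0:ℝ) < C^(θ/α) := Real.rpow_pos_of_pos hC0 _
              have hg : (0:ℝ) ≤ G * C^(θ/α) * ε^(-2:ℝ) :=
                le_of_lt (mul_pos (mul_pos hG0 hCθ) (Real.rpow_pos_of_pos hε _))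
              calc G * (C^(θ/α) * ε^(-2:ℝ)) = G * C^(θ/α) * ε^(-2:ℝ) := by ring
                _ ≤ G * C^(θ/α) * ε^(-2:ℝ) * (Real.log (1/ε))^2 :=
                  le_mul_of_one_le_right hg ht2
            linarith
      _ = (2*c₂*A^2 + G * C^(θ/α)) * ε^(-2:ℝ) * (Real.log (1/ε))^2 := by ring
  · -- case β < θ
    have hβα : β ≤ 2*α := by
      have := hαβθ; rw [min_eq_left hc.le] at this; linarith
    set r : ℝ := (2:ℝ)^((θ-β)/2) with hrdef
    have hr1 : (1:ℝ) < r :=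
      Real.one_lt_rpow_iff_of_pos two_pos |>.mpr (Or.inl ⟨one_lt_two, by linarith⟩)
    have hr0 : (0:ℝ) < r := by linarith
    set K₁ : ℝ := (1 - r⁻¹)⁻¹ with hK₁def
    have hK₁0 : (0:ℝ) < K₁ := by
      have h : r⁻¹ < 1 := inv_lt_one_of_one_lt₀ hr1
      have h2 : (0:ℝ) < 1 - r⁻¹ := by linarith
      positivity
    set p : ℝ := (θ-β)/α with hpdef
    have hp0 : (0:ℝ) < p := by rw [hpdef]; exact div_pos (by linarith) hα
    have hCp : (0:ℝ) < C^p := Real.rpow_pos_of_pos hC0 p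
    have hCθ : (0:ℝ) < C^(θ/α) := Real.rpow_pos_of_pos hC0 _
    refine ⟨2*c₂*K₁^2*C^p + G * C^(θ/α),
      add_pos (mul_pos (mul_pos (mul_pos two_pos hc₂) (pow_pos hK₁0 2)) hCp)
        (mul_pos hG0 hCθ), ?_⟩
    intro ε hε hεe
    have hε1 : ε < 1 := hεe.trans (by
      rw [← Real.exp_zero]; exact Real.exp_lt_exp.mpr (by norm_num))
    obtain ⟨L, Nl, hpos, hacc, hcost, hαL, hL1⟩ := haux ε hε hεe
    refine ⟨L, Nl, hpos, hacc, fun h => absurd h (by linarith), fun h => absurd h (by intro h; rw [h] at hc; exact lt_irrefl θ hc), ?_⟩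
    intro _
    set S : ℝ := ∑ j ∈ Finset.range (L+1), ((2:ℝ)^(-((β-θ)/2)))^j with hSdef
    have hSr : S = ∑ j ∈ Finset.range (L+1), r^j := by
      rw [hSdef, hrdef]
      congr 1
      ext j
      congr 2
      ring
    have hSnn : (0:ℝ) ≤ S := by
      rw [hSr]; exact Finset.sum_nonneg fun j _ => pow_nonneg hr0.le j
    have hSle : S ≤ r^L * K₁ := by rw [hSr]; exact h_geom_le' r hr1 L
    have hrL0 : (0:ℝ) < r^L := pow_pos hr0 L
    have hS2 : S^2 ≤ (r^L)^2 * K₁^2 := by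
      calc S^2 ≤ (r^L * K₁)^2 := pow_le_pow_left₀ hSnn hSle 2
        _ = (r^L)^2 * K₁^2 := by rw [mul_pow]
    have hrL2 : (r^L)^2 = (2:ℝ)^((α*p)*(L:ℝ)) := by
      rw [hrdef, ← h_rpow_nat ((θ-β)/2) L, sq, ← Real.rpow_add two_pos]
      congr 1
      rw [hpdef]
      field_simp
      ring
    have hrle : (r^L)^2 ≤ C^p * ε^(-p) := by
      rw [hrL2]; exact hpow2 L ε hε hαL p hp0.le
    have he2 : ε^(-2:ℝ) = (ε^2)⁻¹ := by
      rw [show ((-2:ℝ)) = -((2:ℕ):ℝ) by norm_num, Real.rpow_neg hε.le, Real.rpow_natCast]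
    have hesplit : ε^(-2-p) = (ε^2)⁻¹ * ε^(-p) := by
      rw [show (-2-p : ℝ) = (-2) + (-p) by ring, Real.rpow_add hε, he2]
    have h2θL : ((2:ℝ)^θ)^L ≤ C^(θ/α) * ε^(-(θ/α)) := by
      have e : ((2:ℝ)^θ)^L = (2:ℝ)^((α*(θ/α))*(L:ℝ)) := by
        rw [← h_rpow_nat θ L]
        congr 1
        field_simp
      rw [e]
      exact hpow2 L ε hε hαL (θ/α) (by positivity)
    have hεθ : ε^(-(θ/α)) ≤ ε^(-2-p) := by
      apply Real.rpow_le_rpow_of_exponent_ge hε hε1.le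
      have h1 : θ/α = p + β/α := by rw [hpdef]; field_simp; ring
      have h2 : β/α ≤ 2 := by rw [div_le_iff₀ hα]; linarith
      linarith [h1, h2]
    calc ∑ ℓ ∈ Finset.range (L+1), ((Nl ℓ:ℝ)) * (2:ℝ)^(θ*(ℓ:ℝ))
        ≤ 2*c₂/ε^2 * S^2 + G * ((2:ℝ)^θ)^L := hcost
      _ ≤ 2*c₂*K₁^2*C^p * ε^(-2-p) + G * (C^(θ/α) * ε^(-2-p)) := by
          apply add_le_add
          · rw [hesplit]
            calc 2*c₂/ε^2 * S^2 = 2*c₂*S^2 * (ε^2)⁻¹ := by ring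
              _ ≤ 2*c₂*((C^p * ε^(-p)) * K₁^2) * (ε^2)⁻¹ := by
                  have hh := hS2.trans (mul_le_mul_of_nonneg_right hrle
                    (by positivity : (0:ℝ) ≤ K₁^2))
                  exact mul_le_mul_of_nonneg_right
                    (mul_le_mul_of_nonneg_left hh (by positivity : (0:ℝ) ≤ 2*c₂)) (by positivity)
              _ = 2*c₂*K₁^2*C^p * ((ε^2)⁻¹ * ε^(-p)) := by ring
          · apply mul_le_mul_of_nonneg_left _ hG0.le
            calc ((2:ℝ)^θ)^L ≤ C^(θ/α) * ε^(-(θ/α)) := h2θL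
              _ ≤ C^(θ/α) * ε^(-2-p) := mul_le_mul_of_nonneg_left hεθ (by positivity)
      _ = (2*c₂*K₁^2*C^p + G * C^(θ/α)) * ε^(-2-p) := by ring
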